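/- For every integer N ≥ 1 and every real τ, write g := g(τ), w := w(τ), z := z(τ), V_n := V_n(τ), and let P := V_1·V_2·⋯·V_N be the ordered matrix product. Then: P_{00} = (gz)^N; P_{0j} = (gz)^{j−1}·gw for 1 ≤ j ≤ N; P_{k0} = gw·(gz)^{N−k} for 1 ≤ k ≤ N; P_{kj} = 0 for 1 ≤ j < k ≤ N; P_{kk} = g·conj(z) for 1 ≤ k ≤ N; and P_{kj} = (gw)²·(gz)^{j−k−1} for 1 ≤ k < j ≤ N. -/

import Mathlib

noncomputable def gf (E ε η t : ℝ) : ℂ :=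
  Complex.exp (Complex.I * t * (E - ε) / 2)

noncomputable def wf (E ε η t : ℝ) : ℂ :=
  (2 * Complex.I * η / Real.sqrt ((E - ε) ^ 2 + 4 * η ^ 2)) *
    Real.sin (t * Real.sqrt ((E - ε) ^ 2 / 4 + η ^ 2))

noncomputable def zf (E ε η t : ℝ) : ℂ :=
  (Real.cos (t * Real.sqrt ((E - ε) ^ 2 / 4 + η ^ 2)) : ℂ) +
    (Complex.I * (E - ε) / Real.sqrt ((E - ε) ^ 2 + 4 * η ^ 2)) *
      Real.sin (t * Real.sqrt ((E - ε) ^ 2 / 4 + η ^ 2))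

noncomputable def Vmat (E ε η : ℝ) (N n : ℕ) (t : ℝ) :
    Matrix (Fin (N + 1)) (Fin (N + 1)) ℂ :=
  fun j k =>
    if j.val = 0 then
      gf E ε η t * zf E ε η t * (if k.val = 0 then 1 else 0) +
        gf E ε η t * wf E ε η t * (if k.val = n then 1 else 0)
    else if j.val = n then
      gf E ε η t * wf E ε η t * (if k.val = 0 then 1 else 0) +
        gf E ε η t * zf E ε η (-t) * (if k.val = n then 1 else 0)
    else if j = k then 1 else 0

lemma zf_neg (E ε η τ : ℝ) : zf E ε η (-τ) = (starRingEnd ℂ) (zf E ε η τ) := by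
  simp only [zf, map_add, map_mul, map_div₀, Complex.conj_I, Complex.conj_ofReal, map_sub,
    neg_mul, Real.cos_neg, Real.sin_neg, Complex.ofReal_neg]
  push_cast
  ring

noncomputable def Fent (g w z zb : ℂ) (m r c : ℕ) : ℂ :=
  if r = 0 then
    if c = 0 then (g*z)^m
    else if c ≤ m then (g*z)^(c-1) * (g*w)
    else 0
  else if r ≤ m then
    if c = 0 then (g*w) * (g*z)^(m - r)
    else if c < r then 0
    else if c = r then g * zb
    else if c ≤ m then (g*w)^2 * (g*z)^(c - r - 1)
    else 0
  else if r = c then 1 else 0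

lemma mulV (E ε η τ : ℝ) (N n : ℕ) (hn1 : 1 ≤ n) (hnN : n ≤ N)
    (P : Matrix (Fin (N+1)) (Fin (N+1)) ℂ) (r c : Fin (N+1)) :
    (P * Vmat E ε η N n τ) r c =
      if c.val = 0 then
        P r 0 * (gf E ε η τ * zf E ε η τ) + P r ⟨n, by omega⟩ * (gf E ε η τ * wf E ε η τ)
      else if c.val = n then
        P r 0 * (gf E ε η τ * wf E ε η τ) + P r ⟨n, by omega⟩ * (gf E ε η τ * zf E ε η (-τ))
      else P r c := by
  rw [Matrix.mul_apply]
  by_cases hc0 : c.val = 0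
  · have hV : ∀ j : Fin (N+1), Vmat E ε η N n τ j c =
        (if j = 0 then gf E ε η τ * zf E ε η τ else 0) +
        (if j = ⟨n, by omega⟩ then gf E ε η τ * wf E ε η τ else 0) := by
      intro j
      simp only [Vmat, Fin.ext_iff, hc0, Fin.val_zero]
      split_ifs <;> simp_all <;> omega
    simp only [hV, mul_add, Finset.sum_add_distrib, mul_ite, mul_zero,
      Finset.sum_ite_eq', Finset.mem_univ, if_true, hc0, if_pos]
  · by_cases hcn : c.val = n
    · have hV : ∀ j : Fin (N+1), Vmat E ε η N n τ j c =
          (if j = 0 then gf E ε η τ * wf E ε η τ else 0) +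
          (if j = ⟨n, by omega⟩ then gf E ε η τ * zf E ε η (-τ) else 0) := by
        intro j
        simp only [Vmat, Fin.ext_iff, hcn]
        split_ifs <;> simp_all <;> omega
      simp only [hV, mul_add, Finset.sum_add_distrib, mul_ite, mul_zero,
        Finset.sum_ite_eq', Finset.mem_univ, if_true, hc0, hcn, if_neg, if_pos]
      rw [if_neg (by omega)]
    · have hV : ∀ j : Fin (N+1), Vmat E ε η N n τ j c = if j = c then 1 else 0 := by
        intro j
        simp only [Vmat, Fin.ext_iff]
        split_ifs <;> simp_all <;> omega
      simp [hV, hc0, hcn]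

lemma Fent_c0 (g w z zb : ℂ) (m a : ℕ) :
    Fent g w z zb m a 0 =
      if a = 0 then (g*z)^m else if a ≤ m then (g*w)*(g*z)^(m-a) else 0 := by
  unfold Fent
  split_ifs <;> first | rfl | omega

lemma Fent_cm1 (g w z zb : ℂ) (m a : ℕ) :
    Fent g w z zb m a (m+1) = if a = m+1 then 1 else 0 := by
  unfold Fent
  split_ifs <;> first | rfl | (exfalso; omega) | exact False.elim (by assumption)

lemma Fstep (g w z zb : ℂ) (m a b : ℕ) :
    (if b = 0 then Fent g w z zb m a 0 * (g*z) + Fent g w z zb m a (m+1) * (g*w)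
     else if b = m+1 then Fent g w z zb m a 0 * (g*w) + Fent g w z zb m a (m+1) * (g*zb)
     else Fent g w z zb m a b) = Fent g w z zb (m+1) a b := by
  by_cases hb0 : b = 0
  · subst hb0
    rw [if_pos rfl, Fent_c0, Fent_cm1, Fent_c0]
    split_ifs <;>
      first
        | (exfalso; omega)
        | exact False.elim (by assumption)
        | ring1
        | (rw [pow_succ]; ring1)
        | (rw [show m+1-a = (m-a)+1 by omega, pow_succ]; ring1)
        | (rw [show m+1-a = 0 by omega, pow_zero]; ring1)
  · by_cases hbm : b = m + 1
    · subst hbm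
      rw [if_neg hb0, if_pos rfl, Fent_c0, Fent_cm1]
      unfold Fent
      split_ifs <;>
        first
          | (exfalso; omega)
          | exact False.elim (by assumption)
          | (rw [show m+1-1 = m by omega]; ring1)
          | (rw [show m+1-a-1 = m-a by omega]; ring1)
          | ring1
    · rw [if_neg hb0, if_neg hbm]
      unfold Fent
      split_ifs <;> first | rfl | (exfalso; omega)

lemma keylem (E ε η τ : ℝ) (N : ℕ) :
    ∀ m, m ≤ N → ∀ r c : Fin (N+1),
      (((List.range m).map (fun i => Vmat E ε η N (i + 1) τ)).prod) r c =
        Fent (gf E ε η τ) (wf E ε η τ) (zf E ε η τ) (zf E ε η (-τ)) m r.val c.val := by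
  intro m
  induction m with
  | zero =>
    intro _ r c
    simp only [List.range_zero, List.map_nil, List.prod_nil, Matrix.one_apply, Fent,
      Fin.ext_iff]
    split_ifs <;> simp_all <;> omega
  | succ m ih =>
    intro hm r c
    rw [List.range_succ, List.map_append, List.prod_append, List.map_singleton,
      List.prod_singleton]
    rw [mulV E ε η τ N (m+1) (by omega) (by omega)]
    simp only [ih (by omega)]
    have h := Fstep (gf E ε η τ) (wf E ε η τ) (zf E ε η τ) (zf E ε η (-τ)) m r.val c.val
    simpa using h

theorem stmt5 (E ε η : ℝ) (hη : 0 < η) (N : ℕ) (hN : 1 ≤ N) (τ : ℝ) :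
    ∀ g w z : ℂ, g = gf E ε η τ → w = wf E ε η τ → z = zf E ε η τ →
    ∀ P : Matrix (Fin (N + 1)) (Fin (N + 1)) ℂ,
      P = ((List.range N).map (fun i => Vmat E ε η N (i + 1) τ)).prod →
    (P 0 0 = (g * z) ^ N) ∧
    (∀ j : Fin (N + 1), 1 ≤ j.val → P 0 j = (g * z) ^ (j.val - 1) * (g * w)) ∧
    (∀ k : Fin (N + 1), 1 ≤ k.val → P k 0 = (g * w) * (g * z) ^ (N - k.val)) ∧
    (∀ k j : Fin (N + 1), 1 ≤ j.val → j.val < k.val → P k j = 0) ∧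
    (∀ k : Fin (N + 1), 1 ≤ k.val → P k k = g * (starRingEnd ℂ) z) ∧
    (∀ k j : Fin (N + 1), 1 ≤ k.val → k.val < j.val →
      P k j = (g * w) ^ 2 * (g * z) ^ (j.val - k.val - 1)) := by
  intro g w z hg hw hz P hP
  subst hg hw hz hP
  have hk := keylem E ε η τ N N le_rfl
  rw [← zf_neg E ε η τ]
  refine ⟨?_, ?_, ?_, ?_, ?_, ?_⟩
  · rw [hk 0 0]
    simp only [Fin.val_zero, Fent]
    split_ifs <;> first | rfl | (exfalso; omega)
  · intro j hj
    have := j.isLt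
    rw [hk 0 j]
    simp only [Fin.val_zero, Fent]
    split_ifs <;> first | rfl | (exfalso; omega)
  · intro k hk1
    have := k.isLt
    rw [hk k 0]
    simp only [Fin.val_zero, Fent]
    split_ifs <;> first | rfl | (exfalso; omega)
  · intro k j h1 h2
    have := k.isLt
    have := j.isLt
    rw [hk k j]
    simp only [Fent]
    split_ifs <;> first | rfl | (exfalso; omega)
  · intro k hk1
    have := k.isLt
    rw [hk k k]
    simp only [Fent]
    split_ifs <;> first | rfl | (exfalso; omega)
  · intro k j h1 h2
    have := k.isLt
    have := j.isLt
    rw [hk k j]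
    simp only [Fent]
    split_ifs <;> first | rfl | (exfalso; omega)
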